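/- In the TRS with the single collapsing rule f(x,y) → x, the infinite term s defined corecursively by s = f(f(s,b),a) admits strongly convergent reductions of length ω to both t₁ = f(t₁,a) and t₂ = f(t₂,b), and t₁, t₂ have no common reduct; hence this orthogonal TRS is not infinitarily confluent. -/

import Mathlib

/-- The signature: a binary symbol `f` and constants `a`, `b`. -/
inductive FabSym : Type
  | f | a | b
deriving DecidableEq

/-- Possibly infinite terms over {f, a, b}, represented as assignments of
symbols to binary positions (`false` = first/left argument, `true` =
second/right argument); positions below a constant carry the dummy value
`FabSym.a` (see `WFTm`). -/
def Tm : Type := List Bool → FabSym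

/-- Well-formedness: below a non-`f` symbol all positions carry the canonical
filler `FabSym.a`. -/
def WFTm (t : Tm) : Prop := ∀ p c, t p ≠ FabSym.f → t (p ++ [c]) = FabSym.a

/-- `p` is a reachable (meaningful) position of `t`: all proper prefixes of
`p` carry the binary symbol `f`. -/
def ReachPos (t : Tm) (p : List Bool) : Prop :=
  ∀ q, q <+: p → q ≠ p → t q = FabSym.f

/-- The symbol `x` occurs in `t` (at a reachable position). -/
def OccursIn (t : Tm) (x : FabSym) : Prop := ∃ p, ReachPos t p ∧ t p = x

/-- A rewrite step with the collapsing rule `f(x,y) → x` at position `p`: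
the subterm at `p` has root `f` and is replaced by its first argument. -/
def stepAtT (p : List Bool) (t t' : Tm) : Prop :=
  t p = FabSym.f ∧
    ∀ q, t' q = if p <+: q then t (p ++ false :: q.drop p.length) else t q

/-- A step at depth at least `d`. -/
def stepTGe (d : ℕ) (t t' : Tm) : Prop :=
  ∃ p : List Bool, d ≤ p.length ∧ stepAtT p t t'

/-- `sconvT t s`: there is a strongly convergent reduction of length `≤ ω`
from `t` to `s`: stages `g n` starting at `t`, all steps from stage `n` on
are at depth `≥ n` (so depths tend to infinity), and stage `n` agrees with
the limit `s` below depth `n`. -/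
def sconvT (t s : Tm) : Prop :=
  ∃ g : ℕ → Tm, g 0 = t ∧
    (∀ n, Relation.ReflTransGen (stepTGe n) (g n) (g (n + 1))) ∧
    (∀ n q, q.length < n → g n q = s q)

/-- The infinite term with spine `f(f(f(…,c 2),c 1),c 0)` written inside-out:
all-left positions carry `f`, and the right argument at spine depth `k` is
the constant `c k`. -/
def spineTm (c : ℕ → FabSym) : Tm := fun p =>
  let k := (p.takeWhile fun x => !x).length
  let r := p.drop k
  if r = [] then FabSym.f else if r = [true] then c k else FabSym.a

/-- `s = f(f(s,b),a)`. -/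
def sTerm : Tm := spineTm fun k => if k % 2 = 0 then FabSym.a else FabSym.b

/-- `t₁ = f(t₁,a)`. -/
def t1Term : Tm := spineTm fun _ => FabSym.a

/-- `t₂ = f(t₂,b)`. -/
def t2Term : Tm := spineTm fun _ => FabSym.b



def delC (j : ℕ) (c : ℕ → FabSym) : ℕ → FabSym := fun k => if k < j then c k else c (k + 1)

lemma drop_takeWhile_len (p : Bool → Bool) (l : List Bool) :
    l.drop (l.takeWhile p).length = l.dropWhile p := by
  calc l.drop (l.takeWhile p).length
      = (l.takeWhile p ++ l.dropWhile p).drop (l.takeWhile p).length := by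
        rw [List.takeWhile_append_dropWhile]
    _ = l.dropWhile p := List.drop_left

lemma spineTm_eq (c : ℕ → FabSym) (q : List Bool) :
    spineTm c q = if q.dropWhile (fun x => !x) = [] then FabSym.f
      else if q.dropWhile (fun x => !x) = [true] then c (q.takeWhile fun x => !x).length
      else FabSym.a := by
  simp only [spineTm, drop_takeWhile_len]

lemma takeWhile_eq_replicate (q : List Bool) :
    q.takeWhile (fun x => !x) = List.replicate (q.takeWhile fun x => !x).length false := by
  apply List.eq_replicate_of_mem
  intro b hb
  have := List.mem_takeWhile_imp hb
  simpa using this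

/-- decomposition when the value is `c k` -/
lemma spine_decomp (q : List Bool) (h : q.dropWhile (fun x => !x) = [true]) :
    q = List.replicate (q.takeWhile fun x => !x).length false ++ [true] := by
  conv_lhs => rw [← List.takeWhile_append_dropWhile (p := fun x => !x) (l := q)]
  rw [h, ← takeWhile_eq_replicate]

lemma spineTm_congr (c c' : ℕ → FabSym) (q : List Bool)
    (h : ∀ k, q = List.replicate k false ++ [true] → c k = c' k) :
    spineTm c q = spineTm c' q := by
  rw [spineTm_eq, spineTm_eq]
  split_ifs with h1 h2
  · rfl
  · exact h _ (spine_decomp q h2)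
  · rfl

lemma spineTm_cons_false (c : ℕ → FabSym) (q : List Bool) :
    spineTm c (false :: q) = spineTm (fun k => c (k + 1)) q := by
  rw [spineTm_eq, spineTm_eq]
  simp [List.dropWhile_cons, List.takeWhile_cons]

lemma spineTm_shift (c : ℕ → FabSym) (j : ℕ) (q : List Bool) :
    spineTm c (List.replicate j false ++ q) = spineTm (fun k => c (j + k)) q := by
  induction j generalizing c with
  | zero => simp
  | succ j ih =>
      rw [List.replicate_succ, List.cons_append, spineTm_cons_false, ih]
      congr 1
      funext k
      congr 1
      omega

lemma spineTm_replicate (c : ℕ → FabSym) (j : ℕ) :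
    spineTm c (List.replicate j false) = FabSym.f := by
  have := spineTm_shift c j []
  simpa [spineTm_eq] using this

/-- the key step lemma -/
lemma stepAt_spine (j : ℕ) (c : ℕ → FabSym) :
    stepAtT (List.replicate j false) (spineTm c) (spineTm (delC j c)) := by
  refine ⟨spineTm_replicate c j, ?_⟩
  intro q
  by_cases h : List.replicate j false <+: q
  · rw [if_pos h]
    obtain ⟨t, ht⟩ := h
    have hdrop : q.drop (List.replicate j false).length = t := by
      rw [← ht, List.drop_left]
    rw [hdrop, ← ht]
    have h1 : List.replicate j false ++ false :: t = List.replicate (j + 1) false ++ t := by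
      rw [List.replicate_succ', List.append_assoc]; rfl
    rw [h1, spineTm_shift, spineTm_shift]
    congr 1
    funext k
    simp only [delC]
    rw [if_neg (by omega)]
    congr 1
    omega
  · rw [if_neg h]
    apply spineTm_congr
    intro k hk
    have hkj : k < j := by
      by_contra hc
      push_neg at hc
      apply h
      refine ⟨List.replicate (k - j) false ++ [true], ?_⟩
      rw [hk, ← List.append_assoc, List.replicate_append_replicate]
      congr 2
      omega
    simp [delC, hkj]

lemma stepAt_spine' (j : ℕ) (c c' : ℕ → FabSym) (h : delC j c = c') :
    stepAtT (List.replicate j false) (spineTm c) (spineTm c') := h ▸ stepAt_spine j c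

/-- if `c` never takes value `f`, a position with symbol `f` is all-left -/
lemma spine_f_pos (c : ℕ → FabSym) (hc : ∀ k, c k ≠ FabSym.f) (p : List Bool)
    (h : spineTm c p = FabSym.f) : p = List.replicate p.length false := by
  rw [spineTm_eq] at h
  split_ifs at h with h1 h2
  · -- dropWhile = [], so takeWhile = p
    have := List.takeWhile_append_dropWhile (p := fun x => !x) (l := p)
    rw [h1, List.append_nil] at this
    conv_lhs => rw [← this]
    rw [takeWhile_eq_replicate, this]
  · exact absurd h (hc _)

lemma step_const {x : FabSym} (hx : x ≠ FabSym.f) {p : List Bool} {t' : Tm}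
    (h : stepAtT p (spineTm fun _ => x) t') : t' = spineTm fun _ => x := by
  have hp : p = List.replicate p.length false := spine_f_pos _ (fun k => hx) p h.1
  funext q
  rw [h.2 q]
  have h2 := (stepAt_spine p.length (fun _ => x)).2 q
  rw [← hp] at h2
  rw [← h2]
  exact spineTm_congr _ _ q (fun k _ => by simp [delC])

lemma rtg_const {x : FabSym} (hx : x ≠ FabSym.f) {d : ℕ} {t' : Tm}
    (h : Relation.ReflTransGen (stepTGe d) (spineTm fun _ => x) t') :
    t' = spineTm fun _ => x := by
  induction h with
  | refl => rfl
  | tail h1 h2 ih =>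
      rw [ih] at h2
      obtain ⟨p, _, hs⟩ := h2
      exact step_const hx hs

lemma sconv_const {x : FabSym} (hx : x ≠ FabSym.f) {u : Tm}
    (h : sconvT (spineTm fun _ => x) u) : u = spineTm fun _ => x := by
  obtain ⟨g, hg0, hstep, hlim⟩ := h
  have hstage : ∀ n, g n = spineTm fun _ => x := by
    intro n
    induction n with
    | zero => exact hg0
    | succ n ih =>
        have h' := hstep n
        rw [ih] at h'
        exact rtg_const hx h'
  funext q
  rw [← hlim (q.length + 1) q (by omega), hstage]

def c1 (n k : ℕ) : FabSym :=
  if k < n then FabSym.a else if (k + n) % 2 = 0 then FabSym.a else FabSym.b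

def c2 (n k : ℕ) : FabSym :=
  if k < n then FabSym.b else if (k + n) % 2 = 0 then FabSym.a else FabSym.b

/-- in the TRS with the single collapsing rule `f(x,y) → x`, the
term `s = f(f(s,b),a)` rewrites by strongly convergent reductions to both
`t₁ = f(t₁,a)` and `t₂ = f(t₂,b)`, and `t₁`, `t₂` have no common reduct; so
this orthogonal TRS is not infinitarily confluent. -/
theorem statement12 :
    sconvT sTerm t1Term ∧ sconvT sTerm t2Term ∧
      ¬ ∃ u : Tm, sconvT t1Term u ∧ sconvT t2Term u := by
  refine ⟨?_, ?_, ?_⟩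
  · refine ⟨fun n => spineTm (c1 n), ?_, ?_, ?_⟩
    · show spineTm (c1 0) = sTerm
      have hc : (fun k => if k % 2 = 0 then FabSym.a else FabSym.b) = c1 0 := by
        funext k
        simp [c1]
      rw [sTerm, hc]
    · intro n
      apply Relation.ReflTransGen.single
      refine ⟨List.replicate (n + 1) false, by simp, ?_⟩
      apply stepAt_spine'
      funext k
      simp only [delC, c1]
      split_ifs <;> first | rfl | omega
    · intro n q hq
      apply spineTm_congr
      intro k hk
      have : k < n := by
        have : q.length = k + 1 := by rw [hk]; simp
        omega
      simp [c1, this]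
  · refine ⟨fun n => spineTm (c2 n), ?_, ?_, ?_⟩
    · show spineTm (c2 0) = sTerm
      have hc : (fun k => if k % 2 = 0 then FabSym.a else FabSym.b) = c2 0 := by
        funext k
        simp [c2]
      rw [sTerm, hc]
    · intro n
      apply Relation.ReflTransGen.single
      refine ⟨List.replicate n false, by simp, ?_⟩
      apply stepAt_spine'
      funext k
      simp only [delC, c2]
      split_ifs <;> first | rfl | omega
    · intro n q hq
      apply spineTm_congr
      intro k hk
      have : k < n := by
        have : q.length = k + 1 := by rw [hk]; simp
        omega
      simp [c2, this]
  · rintro ⟨u, h1, h2⟩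
    have e1 : u = spineTm fun _ => FabSym.a := sconv_const (by simp) h1
    have e2 : u = spineTm fun _ => FabSym.b := sconv_const (by simp) h2
    have : (FabSym.a : FabSym) = FabSym.b := by
      have := congrFun (e1 ▸ e2) [true]
      simpa [spineTm_eq] using this
    simp at this
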